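/- Let A : ℝ → ℝ be a nonconstant function. Let F : ℝ² → ℝ be twice continuously differentiable and suppose that for every (t,x) ∈ ℝ² and every u ∈ ℝ: A(u)·∂_x²F(t,x) + ∂_t F(t,x) = 0. Then there exist constants c₀, c₁ ∈ ℝ such that F(t,x) = c₀ + c₁x for all (t,x) ∈ ℝ². (This is the classifying condition argument showing that for B = 0 and nonlinear A the space of local conservation laws of the diffusion equation is two-dimensional, with densities u and xu.) -/

import Mathlib

/-- Partial derivative with respect to the first (time) variable. -/
noncomputable def pT (f : ℝ → ℝ → ℝ) (t x : ℝ) : ℝ := deriv (fun s => f s x) t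

/-- Partial derivative with respect to the second (space) variable. -/
noncomputable def pX (f : ℝ → ℝ → ℝ) (t x : ℝ) : ℝ := deriv (fun y => f t y) x

/-- If `A` is nonconstant then every solution `F` of the classifying condition
`A(u) F_xx + F_t = 0` (for all values of `u`) is of the form `F = c₀ + c₁ x`. -/
theorem classifying_condition_B_zero
    (A : ℝ → ℝ) (hA : ∃ u1 u2 : ℝ, A u1 ≠ A u2)
    (F : ℝ → ℝ → ℝ) (hF : ContDiff ℝ 2 (fun p : ℝ × ℝ => F p.1 p.2))
    (hcl : ∀ t x u : ℝ, A u * pX (pX F) t x + pT F t x = 0) :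
    ∃ c0 c1 : ℝ, ∀ t x : ℝ, F t x = c0 + c1 * x := by
  obtain ⟨u1, u2, hu⟩ := hA
  -- F_xx = 0 everywhere
  have hxx : ∀ t x : ℝ, pX (pX F) t x = 0 := by
    intro t x
    have e1 := hcl t x u1
    have e2 := hcl t x u2
    have : (A u1 - A u2) * pX (pX F) t x = 0 := by linarith
    rcases mul_eq_zero.mp this with h | h
    · exact absurd (sub_eq_zero.mp h) hu
    · exact h
  -- F_t = 0 everywhere
  have ht : ∀ t x : ℝ, pT F t x = 0 := by
    intro t x
    have := hcl t x u1
    rw [hxx t x] at this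
    linarith
  -- F t x = F 0 x
  have hconst : ∀ t x : ℝ, F t x = F 0 x := by
    intro t x
    have hd : Differentiable ℝ (fun s : ℝ => F s x) := by
      have : ContDiff ℝ 2 (fun s : ℝ => F s x) :=
        hF.comp (contDiff_id.prodMk contDiff_const)
      exact this.differentiable (by norm_num)
    exact is_const_of_deriv_eq_zero hd (fun s => ht s x) t 0
  set g : ℝ → ℝ := fun y => F 0 y with hg
  have hgC : ContDiff ℝ 2 g :=
    hF.comp (contDiff_const.prodMk contDiff_id)
  have hg1 : Differentiable ℝ g := hgC.differentiable (by norm_num)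
  have hg' : Differentiable ℝ (deriv g) := by
    have : ContDiff ℝ 1 (deriv g) := by
      have := (ContDiff.iterate_deriv' 1 1 (by exact_mod_cast hgC : ContDiff ℝ ((1:ℕ)+(1:ℕ) : ℕ) g))
      simpa using this
    exact this.differentiable (by norm_num)
  have hdd : ∀ x : ℝ, deriv (deriv g) x = 0 := fun x => hxx 0 x
  have hc1 : ∀ x : ℝ, deriv g x = deriv g 0 :=
    fun x => is_const_of_deriv_eq_zero hg' hdd x 0
  set c1 : ℝ := deriv g 0 with hc1def
  have hlin : ∀ x : ℝ, g x = g 0 + c1 * x := by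
    intro x
    have hd2 : Differentiable ℝ (fun y : ℝ => g y - c1 * y) :=
      hg1.sub (differentiable_const _ |>.mul differentiable_id)
    have hd0 : ∀ y : ℝ, deriv (fun y : ℝ => g y - c1 * y) y = 0 := by
      intro y
      have hD : HasDerivAt (fun y : ℝ => g y - c1 * y) (deriv g y - c1) y := by
        exact ((hg1 y).hasDerivAt).sub (by simpa using (hasDerivAt_id y).const_mul c1)
      rw [hD.deriv, hc1 y, sub_self]
    have := is_const_of_deriv_eq_zero hd2 hd0 x 0
    simp at this
    linarith
  exact ⟨g 0, c1, fun t x => by rw [hconst t x]; exact hlin x⟩
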